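/- Let A = Λ(α,β,γ,η) be the exterior algebra on four degree-1 generators over ℝ with differential d determined by dα = dβ = dη = 0, dγ = −α∧β (the Chevalley–Eilenberg model of the Kodaira–Thurston manifold), and let ω = β∧γ + α∧η. Then ω is closed, ω∧ω ≠ 0 (so ω is a symplectic class), but the class [ω]∧[β] = 0 in H³: i.e., ω∧β is exact. Hence cup product with [ω] : H¹ → H³ is not injective, so this cohomology does not satisfy the 1-Lefschetz property. -/
import Mathlib


/-- In the Chevalley–Eilenberg model `(Λ(α,β,γ,η), d)` of the
Kodaira–Thurston manifold (`dα = dβ = dη = 0`, `dγ = -α∧β`; on the monomial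
basis `d` vanishes except `dγ = -αβ`, `d(γη) = -αβη`), the form
`ω = β∧γ + α∧η` is closed and `ω∧ω ≠ 0`, yet `ω∧β` is exact while `β` is
closed and not exact; hence cup product with `[ω] : H¹ → H³` is not injective
and the 1-Lefschetz property fails.  Here `α = g 0`, `β = g 1`, `γ = g 2`,
`η = g 3`. -/
theorem stmt9 {A : Type*} [Ring A] [Algebra ℝ A] (g : Fin 4 → A)
    (hanti : ∀ i j, g i * g j = -(g j * g i))
    (m : Finset (Fin 4) → A)
    (hm : ∀ s : Finset (Fin 4), m s = ((s.sort (· ≤ ·)).map g).prod)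
    (hindep : LinearIndependent ℝ m)
    (hspan : Submodule.span ℝ (Set.range m) = ⊤)
    (d : A →ₗ[ℝ] A)
    (hd0 : ∀ s : Finset (Fin 4), s ≠ {2} → s ≠ {2, 3} → d (m s) = 0)
    (hdγ : d (m {2}) = -(m {0, 1}))
    (hdγη : d (m {2, 3}) = -(m {0, 1, 3})) :
    d (g 1 * g 2 + g 0 * g 3) = 0 ∧
    (g 1 * g 2 + g 0 * g 3) * (g 1 * g 2 + g 0 * g 3) ≠ 0 ∧
    d (g 1) = 0 ∧
    (∀ x : A, d x ≠ g 1) ∧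
    (∃ x : A, d x = (g 1 * g 2 + g 0 * g 3) * g 1) := by
  -- squares vanish
  have hsq : ∀ i, g i * g i = 0 := by
    intro i
    have h := hanti i i
    have h2 : (2 : ℝ) • (g i * g i) = 0 := by
      rw [two_smul]
      rw [eq_neg_iff_add_eq_zero] at h
      exact h
    calc g i * g i = (2 : ℝ)⁻¹ • ((2 : ℝ) • (g i * g i)) := by
          rw [smul_smul]; norm_num
      _ = 0 := by rw [h2, smul_zero]
  -- sorted lists of the relevant finsets
  have s1 : (({1} : Finset (Fin 4)).sort (· ≤ ·)) = [1] := Finset.sort_singleton _ _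
  have s12 : (({1, 2} : Finset (Fin 4)).sort (· ≤ ·)) = [1, 2] := by
    rw [Finset.sort_insert, Finset.sort_singleton] <;> decide
  have s03 : (({0, 3} : Finset (Fin 4)).sort (· ≤ ·)) = [0, 3] := by
    rw [Finset.sort_insert, Finset.sort_singleton] <;> decide
  have s23 : (({2, 3} : Finset (Fin 4)).sort (· ≤ ·)) = [2, 3] := by
    rw [Finset.sort_insert, Finset.sort_singleton] <;> decide
  have s013 : (({0, 1, 3} : Finset (Fin 4)).sort (· ≤ ·)) = [0, 1, 3] := by
    rw [Finset.sort_insert, Finset.sort_insert, Finset.sort_singleton] <;> decide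
  have s0123 : (({0, 1, 2, 3} : Finset (Fin 4)).sort (· ≤ ·)) = [0, 1, 2, 3] := by
    rw [Finset.sort_insert, Finset.sort_insert, Finset.sort_insert,
      Finset.sort_singleton] <;> decide
  -- explicit values of m on the relevant monomials
  have m1 : m {1} = g 1 := by rw [hm, s1]; simp
  have m12 : m {1, 2} = g 1 * g 2 := by rw [hm, s12]; simp
  have m03 : m {0, 3} = g 0 * g 3 := by rw [hm, s03]; simp
  have m23 : m {2, 3} = g 2 * g 3 := by rw [hm, s23]; simp
  have m013 : m {0, 1, 3} = g 0 * (g 1 * g 3) := by rw [hm, s013]; simp [mul_assoc]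
  have m0123 : m {0, 1, 2, 3} = g 0 * (g 1 * (g 2 * g 3)) := by
    rw [hm, s0123]; simp [mul_assoc]
  -- monomial product computations
  have p5 : g 1 * g 2 * g 1 = 0 := by
    calc g 1 * g 2 * g 1 = g 1 * (g 2 * g 1) := mul_assoc _ _ _
      _ = g 1 * -(g 1 * g 2) := by rw [hanti 2 1]
      _ = -(g 1 * g 1 * g 2) := by rw [mul_neg, mul_assoc]
      _ = 0 := by rw [hsq 1, zero_mul, neg_zero]
  have p6 : g 0 * g 3 * g 1 = -(g 0 * (g 1 * g 3)) := by
    calc g 0 * g 3 * g 1 = g 0 * (g 3 * g 1) := mul_assoc _ _ _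
      _ = g 0 * -(g 1 * g 3) := by rw [hanti 3 1]
      _ = -(g 0 * (g 1 * g 3)) := by rw [mul_neg]
  have p1 : g 1 * g 2 * (g 1 * g 2) = 0 := by
    rw [← mul_assoc, p5, zero_mul]
  have p2' : g 0 * g 3 * g 0 = 0 := by
    calc g 0 * g 3 * g 0 = g 0 * (g 3 * g 0) := mul_assoc _ _ _
      _ = g 0 * -(g 0 * g 3) := by rw [hanti 3 0]
      _ = -(g 0 * g 0 * g 3) := by rw [mul_neg, mul_assoc]
      _ = 0 := by rw [hsq 0, zero_mul, neg_zero]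
  have p2 : g 0 * g 3 * (g 0 * g 3) = 0 := by
    rw [← mul_assoc, p2', zero_mul]
  have p3 : g 1 * g 2 * (g 0 * g 3) = g 0 * (g 1 * (g 2 * g 3)) := by
    have h120 : g 1 * g 2 * g 0 = g 0 * g 1 * g 2 := by
      calc g 1 * g 2 * g 0 = g 1 * (g 2 * g 0) := mul_assoc _ _ _
        _ = g 1 * -(g 0 * g 2) := by rw [hanti 2 0]
        _ = -(g 1 * g 0) * g 2 := by rw [mul_neg, ← mul_assoc, ← neg_mul]
        _ = g 0 * g 1 * g 2 := by rw [hanti 1 0, neg_neg]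
    calc g 1 * g 2 * (g 0 * g 3) = g 1 * g 2 * g 0 * g 3 := (mul_assoc _ _ _).symm
      _ = g 0 * g 1 * g 2 * g 3 := by rw [h120]
      _ = g 0 * (g 1 * (g 2 * g 3)) := by noncomm_ring
  have p4 : g 0 * g 3 * (g 1 * g 2) = g 0 * (g 1 * (g 2 * g 3)) := by
    calc g 0 * g 3 * (g 1 * g 2) = g 0 * g 3 * g 1 * g 2 := (mul_assoc _ _ _).symm
      _ = -(g 0 * (g 1 * g 3)) * g 2 := by rw [p6]
      _ = -(g 0 * (g 1 * (g 3 * g 2))) := by rw [neg_mul, mul_assoc, mul_assoc]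
      _ = -(g 0 * (g 1 * -(g 2 * g 3))) := by rw [hanti 3 2]
      _ = g 0 * (g 1 * (g 2 * g 3)) := by rw [mul_neg, mul_neg, neg_neg]
  -- (1) ω is closed
  refine ⟨?_, ?_, ?_, ?_, ?_⟩
  · rw [← m12, ← m03, map_add, hd0 {1, 2} (by decide) (by decide),
      hd0 {0, 3} (by decide) (by decide), add_zero]
  -- (2) ω ∧ ω ≠ 0
  · have hωω : (g 1 * g 2 + g 0 * g 3) * (g 1 * g 2 + g 0 * g 3)
        = m {0, 1, 2, 3} + m {0, 1, 2, 3} := by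
      rw [add_mul, mul_add, mul_add, p1, p2, p3, p4, m0123]
      abel
    rw [hωω]
    intro h
    have hne : m ({0, 1, 2, 3} : Finset (Fin 4)) ≠ 0 := hindep.ne_zero _
    apply hne
    have h2 : (2 : ℝ) • m ({0, 1, 2, 3} : Finset (Fin 4)) = 0 := by
      rw [two_smul]; exact h
    calc m ({0, 1, 2, 3} : Finset (Fin 4))
        = (2 : ℝ)⁻¹ • ((2 : ℝ) • m ({0, 1, 2, 3} : Finset (Fin 4))) := by
          rw [smul_smul]; norm_num
      _ = 0 := by rw [h2, smul_zero]
  -- (3) β is closed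
  · rw [← m1]; exact hd0 {1} (by decide) (by decide)
  -- (4) β is not exact
  · intro x hx
    have hx' : x ∈ Submodule.span ℝ (Set.range m) := by rw [hspan]; exact Submodule.mem_top
    rw [Submodule.mem_span_range_iff_exists_fun] at hx'
    obtain ⟨c, hc⟩ := hx'
    have hdx : d x = c {2} • -(m {0, 1}) + c {2, 3} • -(m {0, 1, 3}) := by
      rw [← hc, map_sum]
      have hsub : (∑ s : Finset (Fin 4), d (c s • m s))
          = ∑ s ∈ ({({2} : Finset (Fin 4)), {2, 3}} : Finset (Finset (Fin 4))),
              d (c s • m s) := by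
        refine (Finset.sum_subset (Finset.subset_univ _) ?_).symm
        intro s _ hs
        simp only [Finset.mem_insert, Finset.mem_singleton, not_or] at hs
        rw [map_smul, hd0 s hs.1 hs.2, smul_zero]
      rw [hsub, Finset.sum_insert (by decide), Finset.sum_singleton,
        map_smul, map_smul, hdγ, hdγη]
    rw [hx, ← m1] at hdx
    -- build the vanishing linear combination
    set f : Finset (Fin 4) → ℝ := fun s =>
      if s = {1} then 1 else if s = {0, 1} then c {2} else if s = {0, 1, 3} then c {2, 3} else 0
      with hf
    have hsum : (∑ s : Finset (Fin 4), f s • m s) = 0 := by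
      have hsub : (∑ s : Finset (Fin 4), f s • m s)
          = ∑ s ∈ ({({1} : Finset (Fin 4)), {0, 1}, {0, 1, 3}} : Finset (Finset (Fin 4))),
              f s • m s := by
        refine (Finset.sum_subset (Finset.subset_univ _) ?_).symm
        intro s _ hs
        simp only [Finset.mem_insert, Finset.mem_singleton, not_or] at hs
        rw [hf]
        simp only [hs.1, hs.2.1, hs.2.2, if_false]
        rw [zero_smul]
      rw [hsub, Finset.sum_insert (by decide), Finset.sum_insert (by decide),
        Finset.sum_singleton]
      have e1 : f {1} = 1 := by rw [hf]; simp
      have e2 : f ({0, 1} : Finset (Fin 4)) = c {2} := by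
        simp only [hf]
        rw [if_neg (show ({0, 1} : Finset (Fin 4)) ≠ {1} by decide)]
        simp
      have e3 : f ({0, 1, 3} : Finset (Fin 4)) = c {2, 3} := by
        simp only [hf]
        rw [if_neg (show ({0, 1, 3} : Finset (Fin 4)) ≠ {1} by decide),
          if_neg (show ({0, 1, 3} : Finset (Fin 4)) ≠ {0, 1} by decide)]
        simp
      rw [e1, e2, e3, one_smul, hdx, smul_neg, smul_neg]
      abel
    have hzero := Fintype.linearIndependent_iff.mp hindep f hsum {1}
    rw [hf] at hzero
    simp at hzero
  -- (5) ω ∧ β is exact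
  · refine ⟨m {2, 3}, ?_⟩
    rw [hdγη, m013, add_mul, p5, p6, zero_add]
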